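/- arXiv:math/9903114 — 9 statements merged into one kernel-verified Lean document; each statement's English description precedes it below -/
import Mathlib

section
/- Let (P, ≤) be a partial order and let κ be an infinite cardinal (regarded as a well-ordered index set of ordinals α < κ). Suppose there is a family (D_α)_{α<κ} of subsets of P such that each D_α is open, dense, and closed under the equivalence ≈, and such that the intersection ⋂_{α<κ} D_α is not dense in P. Then player INC has a winning strategy in the game G(P, κ). -/
/-- Compatibility in a partial order (forcing convention): a common lower bound. -/
def OrdCompat {P : Type*} [PartialOrder P] (p q : P) : Prop := ∃ r, r ≤ p ∧ r ≤ q

/-- The equivalence `p ≈ q`: `p` and `q` are compatible with the same elements. -/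
def OrdEquiv {P : Type*} [PartialOrder P] (p q : P) : Prop :=
  ∀ e, OrdCompat e p ↔ OrdCompat e q

/-- A strategy for player INC in the game `G(P, κ)`: it assigns to every round `α`
and every sequence of pairs of moves `(p_β^INC, p_β^COM)` for the rounds `β < α`
an element of `P` (the move `p_α^INC`). -/
def Strategy (P ι : Type*) [LT ι] : Type _ :=
  ∀ α : ι, (∀ β : ι, β < α → P × P) → P

/-- A position (partial play before round `α`) is legal if within each round COM's
move is below INC's move, and each move is below all earlier moves. -/
def PartLegal {P ι : Type*} [PartialOrder P] [LT ι] {α : ι}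
    (h : ∀ β : ι, β < α → P × P) : Prop :=
  (∀ β hβ, (h β hβ).2 ≤ (h β hβ).1) ∧
  ∀ β hβ γ hγ, β < γ → (h γ hγ).1 ≤ (h β hβ).2

/-- The full play `(f, g)` (INC playing `f α`, COM playing `g α`) follows the
strategy `σ` of INC. -/
def Follows {P ι : Type*} [LT ι] (σ : Strategy P ι) (f g : ι → P) : Prop :=
  ∀ α : ι, f α = σ α fun β _ => (f β, g β)

/-- The full play `(f, g)` is legal: `p_α^INC ≥ p_α^COM ≥ p_β^INC ≥ p_β^COM`
for all `α < β`. -/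
def Legal {P ι : Type*} [PartialOrder P] [LT ι] (f g : ι → P) : Prop :=
  (∀ α, g α ≤ f α) ∧ ∀ α β : ι, α < β → f β ≤ g α

/-- `σ` is a winning strategy for INC in the game `G(P, ι)`: at every legal
position at which some legal move exists, `σ` produces a legal move, and every
full legal play following `σ` has no lower bound in `P` (plays that terminate
because INC has no legal move count as wins for INC). -/
def WinningINC {P ι : Type*} [PartialOrder P] [LT ι] (σ : Strategy P ι) : Prop :=
  (∀ (α : ι) (h : ∀ β : ι, β < α → P × P), PartLegal h →
    (∃ p : P, ∀ β hβ, p ≤ (h β hβ).1 ∧ p ≤ (h β hβ).2) →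
    ∀ β hβ, σ α h ≤ (h β hβ).1 ∧ σ α h ≤ (h β hβ).2) ∧
  ∀ f g : ι → P, Follows σ f g → Legal f g → ¬∃ q : P, ∀ α, q ≤ f α ∧ q ≤ g α

/-- If there is a family of `κ` open dense subsets of `P`, each closed under `≈`,
whose intersection is not dense, then INC has a winning strategy in `G(P, κ)`
(the game of length `κ`, indexed by the ordinals `< κ`). -/
theorem inc_winning_of_intersection_not_dense {P : Type*} [PartialOrder P]
    (κ : Cardinal) (hκ : Cardinal.aleph0 ≤ κ)
    (D : {α : Ordinal // α < κ.ord} → Set P)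
    (hopen : ∀ α, ∀ p ∈ D α, ∀ q : P, q ≤ p → q ∈ D α)
    (hdense : ∀ α, ∀ p : P, ∃ q ∈ D α, q ≤ p)
    (hclosed : ∀ α, ∀ p ∈ D α, ∀ q : P, OrdEquiv p q → q ∈ D α)
    (hnotdense : ¬ ∀ p : P, ∃ q ∈ ⋂ α, D α, q ≤ p) :
    ∃ σ : Strategy P {α : Ordinal // α < κ.ord}, WinningINC σ := by
  classical
  push_neg at hnotdense
  obtain ⟨p₀, hp₀⟩ := hnotdense
  let ι := {α : Ordinal // α < κ.ord}
  have hκ0 : (0 : Ordinal) < κ.ord := by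
    rw [pos_iff_ne_zero, ne_eq, Cardinal.ord_eq_zero]
    intro h
    rw [h] at hκ
    exact Cardinal.aleph0_ne_zero (le_antisymm (h ▸ hκ) zero_le)
  let Q : ∀ α : ι, (∀ β : ι, β < α → P × P) → P → Prop :=
    fun α h p => ∀ β hβ, p ≤ (h β hβ).1 ∧ p ≤ (h β hβ).2
  let σ : Strategy P ι := fun α h =>
    if h1 : ∃ p : P, Q α h p ∧ p ≤ p₀ then (hdense α h1.choose).choose
    else if h2 : ∃ p : P, Q α h p then (hdense α h2.choose).choose
    else p₀
  have key : ∀ (α : ι) (h : ∀ β : ι, β < α → P × P),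
      (h1 : ∃ p : P, Q α h p ∧ p ≤ p₀) → σ α h ∈ D α ∧ σ α h ≤ h1.choose := by
    intro α h h1
    have : σ α h = (hdense α h1.choose).choose := dif_pos h1
    rw [this]
    obtain ⟨hm, hle⟩ := (hdense α h1.choose).choose_spec
    exact ⟨hm, hle⟩
  refine ⟨σ, ?_, ?_⟩
  · intro α h _ hex β hβ
    by_cases h1 : ∃ p : P, Q α h p ∧ p ≤ p₀
    · obtain ⟨_, hle⟩ := key α h h1
      obtain ⟨hQ, _⟩ := h1.choose_spec
      exact ⟨hle.trans (hQ β hβ).1, hle.trans (hQ β hβ).2⟩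
    · have h2 : ∃ p : P, Q α h p := hex
      have : σ α h = (hdense α h2.choose).choose := by
        simp only [σ, dif_neg h1, dif_pos h2]
      rw [this]
      obtain ⟨_, hle⟩ := (hdense α h2.choose).choose_spec
      exact ⟨hle.trans ((h2.choose_spec) β hβ).1, hle.trans ((h2.choose_spec) β hβ).2⟩
  · rintro f g hfol hleg ⟨q, hq⟩
    set a0 : ι := ⟨0, hκ0⟩ with ha0
    have hvac : ∀ β : ι, ¬ β < a0 := by
      intro β hβ
      exact (zero_le : (0 : Ordinal) ≤ β.1).not_gt (Subtype.coe_lt_coe.mpr hβ)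
    -- f a0 ≤ p₀
    have h1₀ : ∃ p : P, Q a0 (fun β _ => (f β, g β)) p ∧ p ≤ p₀ :=
      ⟨p₀, fun β hβ => absurd hβ (hvac β), le_rfl⟩
    have hf0 : f a0 ≤ p₀ := by
      obtain ⟨_, hle⟩ := key a0 _ h1₀
      rw [hfol a0]
      exact hle.trans h1₀.choose_spec.2
    have hqp₀ : q ≤ p₀ := (hq a0).1.trans hf0
    -- every f α is in D α
    have hfD : ∀ α : ι, f α ∈ D α := by
      intro α
      have h1 : ∃ p : P, Q α (fun β _ => (f β, g β)) p ∧ p ≤ p₀ :=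
        ⟨q, fun β _ => ⟨(hq β).1, (hq β).2⟩, hqp₀⟩
      obtain ⟨hm, _⟩ := key α _ h1
      rw [hfol α]
      exact hm
    have : q ∈ ⋂ α, D α := Set.mem_iInter.mpr fun α => hopen α (f α) (hfD α) q (hq α).1
    exact hp₀ q this hqp₀
end

section
/- The partial order (divs, ≤*) is σ-closed: for every sequence (c̄ⁿ)_{n∈ℕ} of elements of divs with c̄ⁿ⁺¹ ≤* c̄ⁿ for all n, there exists c̄ ∈ divs such that c̄ ≤* c̄ⁿ for every n. -/
open Filter

/-- `Divs c` says that `c` is a sequence of nonnegative reals converging to `0`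
whose series diverges, i.e. `c ∈ divs`. -/
def Divs (c : ℕ → ℝ) : Prop :=
  (∀ n, 0 ≤ c n) ∧ Tendsto c atTop (nhds 0) ∧
    Tendsto (fun N => ∑ n ∈ Finset.range N, c n) atTop atTop

/-- `LeStar d c` is the eventual dominance relation `d ≤* c`. -/
def LeStar (d c : ℕ → ℝ) : Prop := ∀ᶠ n in atTop, d n ≤ c n

/-- The partial order `(divs, ≤*)` is σ-closed: every `≤*`-decreasing sequence of
elements of `divs` has a lower bound in `divs`. -/
theorem divs_sigma_closed (c : ℕ → ℕ → ℝ) (hdiv : ∀ n, Divs (c n))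
    (hdec : ∀ n, LeStar (c (n + 1)) (c n)) :
    ∃ d : ℕ → ℝ, Divs d ∧ ∀ n, LeStar d (c n) := by
  -- chain dominance
  have hchain : ∀ m i, i ≤ m → LeStar (c m) (c i) := by
    intro m
    induction m with
    | zero => intro i hi; rw [Nat.le_zero.mp hi]; exact Eventually.of_forall fun _ => le_rfl
    | succ m ih =>
      intro i hi
      rcases Nat.eq_or_lt_of_le hi with h | h
      · rw [← h]; exact Eventually.of_forall fun _ => le_rfl
      · exact ((hdec m).and (ih i (Nat.lt_succ_iff.mp h))).mono fun k ⟨h1, h2⟩ => h1.trans h2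
  have hBex : ∀ m, ∃ B : ℕ, ∀ k ≥ B, ∀ i ≤ m, c m k ≤ c i k := by
    intro m
    have : ∀ᶠ k in atTop, ∀ i ∈ Finset.range (m + 1), c m k ≤ c i k :=
      (Finset.range (m + 1)).eventually_all.mpr fun i _ => hchain m i (by
        simp_all [Nat.lt_succ_iff])
    rcases eventually_atTop.mp this with ⟨B, hB⟩
    exact ⟨B, fun k hk i hi => hB k hk i (Finset.mem_range.mpr (Nat.lt_succ_iff.mpr hi))⟩
  choose B hB using hBex
  -- block endpoints: given start a, find S with sum of c m over [a, S) ≥ 1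
  have hSex : ∀ m a, ∃ S : ℕ, a < S ∧ 1 ≤ ∑ k ∈ Finset.Ico a S, c m k := by
    intro m a
    have := (hdiv m).2.2
    rcases (tendsto_atTop_atTop.mp this (∑ k ∈ Finset.range a, c m k + 1)) with ⟨S0, hS0⟩
    refine ⟨max S0 (a + 1), Nat.lt_of_lt_of_le a.lt_succ_self (le_max_right _ _), ?_⟩
    have hle : a ≤ max S0 (a + 1) := le_trans a.le_succ (le_max_right _ _)
    have := hS0 (max S0 (a + 1)) (le_max_left _ _)
    have hsplit := Finset.sum_range_add_sum_Ico (c m) hle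
    linarith
  choose S hS1 hS2 using hSex
  -- define block starts
  set N : ℕ → ℕ := fun m => Nat.rec (B 0) (fun m Nm => max (B (m + 1)) (max (Nm + 1) (S m Nm))) m
    with hNdef
  have hN0 : N 0 = B 0 := rfl
  have hNsucc : ∀ m, N (m + 1) = max (B (m + 1)) (max (N m + 1) (S m (N m))) := fun m => rfl
  have hNB : ∀ m, B m ≤ N m := by
    intro m; cases m with
    | zero => exact le_of_eq hN0.symm
    | succ m => rw [hNsucc]; exact le_max_left _ _
  have hNlt : ∀ m, N m < N (m + 1) := by
    intro m; rw [hNsucc]; exact lt_of_lt_of_le (Nat.lt_succ_self _)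
      (le_trans (le_max_left _ _) (le_max_right _ _))
  have hNmono : StrictMono N := strictMono_nat_of_lt_succ hNlt
  have hNS : ∀ m, S m (N m) ≤ N (m + 1) := by
    intro m; rw [hNsucc]; exact le_trans (le_max_right _ _) (le_max_right _ _)
  have hmN : ∀ m, m ≤ N m := fun m => le_trans (Nat.le_of_lt_succ (Nat.lt_succ_of_le
    hNmono.le_apply)) le_rfl
  -- block index
  set idx : ℕ → ℕ := fun k => Nat.findGreatest (fun m => N m ≤ k) k with hidxdef
  have hidx_spec : ∀ k, N 0 ≤ k → N (idx k) ≤ k := by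
    intro k hk
    exact Nat.findGreatest_spec (P := fun m => N m ≤ k) (Nat.zero_le k) hk
  have hidx_ge : ∀ i k, N i ≤ k → i ≤ idx k :=
    fun i k hik => Nat.le_findGreatest (le_trans (hmN i) hik) hik
  have hidx_eq : ∀ m k, N m ≤ k → k < N (m + 1) → idx k = m := by
    intro m k h1 h2
    refine le_antisymm ?_ (hidx_ge m k h1)
    by_contra h
    push_neg at h
    have hmm := hNmono.le_iff_le.mpr (Nat.succ_le_of_lt h : m + 1 ≤ idx k)
    have hle : N (idx k) ≤ k := hidx_spec k (le_trans (hNmono.le_iff_le.mpr (Nat.zero_le m)) h1)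
    exact absurd h2 (not_lt.mpr (hmm.trans hle))
  classical
  refine ⟨fun k => if N 0 ≤ k then c (idx k) k else 0, ⟨?_, ?_, ?_⟩, ?_⟩
  · intro k
    by_cases h : N 0 ≤ k
    · simp only [h, if_true]; exact (hdiv (idx k)).1 k
    · simp [h]
  · -- tendsto 0 via squeeze with c 0
    apply tendsto_of_tendsto_of_tendsto_of_le_of_le' tendsto_const_nhds (hdiv 0).2.1
    · exact Eventually.of_forall fun k => by
        by_cases h : N 0 ≤ k
        · simp only [h, if_true]; exact (hdiv (idx k)).1 k
        · simp [h]
    · filter_upwards [eventually_ge_atTop (N 0)] with k hk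
      simp only [hk, if_true]
      exact hB (idx k) k (le_trans (hNB _) (hidx_spec k hk)) 0 (Nat.zero_le _)
  · -- divergent sums
    set d : ℕ → ℝ := fun k => if N 0 ≤ k then c (idx k) k else 0 with hd
    have hd0 : ∀ k, 0 ≤ d k := by
      intro k; rw [hd]
      by_cases h : N 0 ≤ k
      · simp only [h, if_true]; exact (hdiv (idx k)).1 k
      · simp [h]
    have hblock : ∀ m, (1 : ℝ) ≤ ∑ k ∈ Finset.Ico (N m) (N (m + 1)), d k := by
      intro m
      have heq : ∀ k ∈ Finset.Ico (N m) (N (m + 1)), d k = c m k := by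
        intro k hk
        rw [Finset.mem_Ico] at hk
        have h0 : N 0 ≤ k := le_trans (hNmono.le_iff_le.mpr (Nat.zero_le m)) hk.1
        rw [hd]; simp only [h0, if_true, hidx_eq m k hk.1 hk.2]
      rw [Finset.sum_congr rfl heq]
      calc (1 : ℝ) ≤ ∑ k ∈ Finset.Ico (N m) (S m (N m)), c m k := hS2 m (N m)
        _ ≤ ∑ k ∈ Finset.Ico (N m) (N (m + 1)), c m k := by
            apply Finset.sum_le_sum_of_subset_of_nonneg
            · exact Finset.Ico_subset_Ico le_rfl (hNS m)
            · intro i _ _; exact (hdiv m).1 i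
    have hsum : ∀ M : ℕ, (M : ℝ) ≤ ∑ k ∈ Finset.range (N M), d k := by
      intro M
      induction M with
      | zero =>
        simp only [Nat.cast_zero]
        exact Finset.sum_nonneg fun k _ => hd0 k
      | succ M ih =>
        rw [Finset.range_eq_Ico, ← Finset.sum_Ico_consecutive _ (Nat.zero_le (N M))
          (le_of_lt (hNlt M)), ← Finset.range_eq_Ico]
        push_cast
        linarith [hblock M]
    have hmono : Monotone (fun K => ∑ k ∈ Finset.range K, d k) := by
      apply monotone_nat_of_le_succ
      intro K
      rw [Finset.sum_range_succ]
      linarith [hd0 K]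
    rw [tendsto_atTop_atTop]
    intro b
    refine ⟨N ⌈b⌉₊, fun K hK => ?_⟩
    calc b ≤ (⌈b⌉₊ : ℝ) := Nat.le_ceil b
      _ ≤ ∑ k ∈ Finset.range (N ⌈b⌉₊), d k := hsum _
      _ ≤ ∑ k ∈ Finset.range K, d k := hmono hK
  · intro i
    filter_upwards [eventually_ge_atTop (N i)] with k hk
    have h0 : N 0 ≤ k := le_trans (hNmono.le_iff_le.mpr (Nat.zero_le i)) hk
    simp only [h0, if_true]
    exact hB (idx k) k (le_trans (hNB _) (hidx_spec k h0)) i (hidx_ge i k hk)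
end

section
/- Below every divergent series there are continuum many pairwise incompatible divergent series: for every c̄ ∈ divs there exists a family (d̄ˣ)_{x ∈ ℝ} of elements of divs such that d̄ˣ ≤* c̄ for every x ∈ ℝ, and for all x ≠ y the series d̄ˣ and d̄ʸ are incompatible, i.e., there is no ē ∈ divs with ē ≤* d̄ˣ and ē ≤* d̄ʸ. -/
open Filter

/-- Below every divergent series there are continuum many pairwise incompatible
divergent series: a family indexed by `ℝ` of elements of `divs` below `c`,
any two of which have no common lower bound in `divs`. -/
theorem continuum_many_incompatible_below (c : ℕ → ℝ) (hc : Divs c) :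
    ∃ d : ℝ → ℕ → ℝ,
      (∀ x, Divs (d x)) ∧ (∀ x, LeStar (d x) c) ∧
      ∀ x y : ℝ, x ≠ y →
        ¬ ∃ e : ℕ → ℝ, Divs e ∧ LeStar e (d x) ∧ LeStar e (d y) := by
  classical
  obtain ⟨hc0, hclim, hcdiv⟩ := hc
  -- Step 1: split ℕ into consecutive blocks, each of `c`-sum at least 1.
  have key : ∀ m : ℕ, ∃ M, m < M ∧ 1 ≤ ∑ n ∈ Finset.Ico m M, c n := by
    intro m
    have h1 := hcdiv.eventually (eventually_ge_atTop ((∑ n ∈ Finset.range m, c n) + 1))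
    obtain ⟨M, hM1, hM2⟩ := (h1.and (eventually_gt_atTop m)).exists
    refine ⟨M, hM2, ?_⟩
    have hsub : ∑ n ∈ Finset.Ico m M, c n
        = ∑ n ∈ Finset.range M, c n - ∑ n ∈ Finset.range m, c n := by
      rw [Finset.sum_Ico_eq_sub _ hM2.le]
    rw [hsub]; linarith
  choose f hf1 hf2 using key
  set N : ℕ → ℕ := fun k => Nat.rec 0 (fun _ m => f m) k with hN
  have hN0 : N 0 = 0 := rfl
  have hNsucc : ∀ k, N (k + 1) = f (N k) := fun k => rfl
  have hNmono : StrictMono N := strictMono_nat_of_lt_succ fun k => by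
    rw [hNsucc]; exact hf1 (N k)
  have hNblock : ∀ k, (1 : ℝ) ≤ ∑ n ∈ Finset.Ico (N k) (N (k + 1)), c n := fun k => by
    rw [hNsucc]; exact hf2 (N k)
  -- block index of a natural number
  set b : ℕ → ℕ := fun n => Nat.findGreatest (fun k => N k ≤ n) n with hbdef
  have hb_le : ∀ n, N (b n) ≤ n := by
    intro n
    have h0 : N 0 ≤ n := by rw [hN0]; exact Nat.zero_le n
    exact Nat.findGreatest_spec (P := fun k => N k ≤ n) (Nat.zero_le n) h0
  have hb_lt : ∀ n, n < N (b n + 1) := by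
    intro n
    by_contra h
    push_neg at h
    have h1 : b n + 1 ≤ n := le_trans hNmono.le_apply h
    have h2 : b n + 1 ≤ b n := Nat.le_findGreatest (P := fun k => N k ≤ n) h1 h
    omega
  have hb_eq : ∀ k n, N k ≤ n → n < N (k + 1) → b n = k := by
    intro k n h1 h2
    have hk : k ≤ b n :=
      Nat.le_findGreatest (P := fun j => N j ≤ n) (le_trans hNmono.le_apply h1) h1
    have hk2 : b n ≤ k := by
      by_contra h
      push_neg at h
      exact absurd (le_trans (hNmono.le_iff_le.mpr h) (hb_le n)) (not_le.mpr h2)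
    omega
  have hb_ge : ∀ K n, N K ≤ n → K ≤ b n := fun K n h =>
    Nat.le_findGreatest (P := fun j => N j ≤ n) (le_trans hNmono.le_apply h) h
  -- Step 2: for each real x, an injective sequence of rationals approaching x from above
  have hq : ∀ (x : ℝ) (n : ℕ), ∃ q : ℚ, x + 1 / ((n : ℝ) + 2) < (q : ℝ) ∧
      (q : ℝ) < x + 1 / ((n : ℝ) + 1) := by
    intro x n
    apply exists_rat_btwn
    have h1 : (1 : ℝ) / ((n : ℝ) + 2) < 1 / ((n : ℝ) + 1) := by
      apply one_div_lt_one_div_of_lt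
      · positivity
      · linarith
    linarith
  choose q hq1 hq2 using hq
  set a : ℝ → ℕ → ℕ := fun x n => Encodable.encode (q x n) with ha
  have hq_anti : ∀ x, StrictAnti fun n => (q x n : ℝ) := by
    intro x
    apply strictAnti_nat_of_succ_lt
    intro n
    have h1 := hq2 x (n + 1)
    have h2 := hq1 x n
    have h3 : ((n + 1 : ℕ) : ℝ) + 1 = (n : ℝ) + 2 := by push_cast; ring
    rw [h3] at h1
    exact lt_trans h1 h2
  have ha_inj : ∀ x, Function.Injective (a x) := by
    intro x m n h
    have h1 : q x m = q x n := Encodable.encode_injective h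
    have h2 : ((q x m : ℚ) : ℝ) = ((q x n : ℚ) : ℝ) := by rw [h1]
    exact (hq_anti x).injective h2
  -- almost disjointness
  have hAD : ∀ x y : ℝ, x < y → (Set.range (a x) ∩ Set.range (a y)).Finite := by
    intro x y hxy
    set n0 : ℕ := ⌈1 / (y - x)⌉₊ + 1 with hn0
    apply Set.Finite.subset (Set.Finite.image (a x) (Set.finite_Iio n0))
    rintro e ⟨⟨n, rfl⟩, ⟨m, hm⟩⟩
    refine ⟨n, ?_, rfl⟩
    have hqq : q y m = q x n := Encodable.encode_injective hm
    have hy : y + 1 / ((m : ℝ) + 2) < (q x n : ℝ) := by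
      have := hq1 y m; rwa [hqq] at this
    have hympos : (0 : ℝ) < 1 / ((m : ℝ) + 2) := by positivity
    have hx : (q x n : ℝ) < x + 1 / ((n : ℝ) + 1) := hq2 x n
    have hgap : y - x < 1 / ((n : ℝ) + 1) := by linarith
    have hyx : (0 : ℝ) < y - x := by linarith
    have hcast : ((n : ℝ) + 1) < 1 / (y - x) := by
      rw [lt_div_iff₀ hyx]
      have hn1 : (0 : ℝ) < (n : ℝ) + 1 := by positivity
      calc ((n : ℝ) + 1) * (y - x) < ((n : ℝ) + 1) * (1 / ((n : ℝ) + 1)) := by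
            exact mul_lt_mul_of_pos_left hgap hn1
        _ = 1 := by field_simp
    have : (n : ℝ) < (⌈1 / (y - x)⌉₊ : ℝ) + 1 := by
      have := Nat.le_ceil (1 / (y - x))
      linarith
    have : n < ⌈1 / (y - x)⌉₊ + 1 := by exact_mod_cast this
    simpa [hn0] using this
  -- the family
  set d : ℝ → ℕ → ℝ := fun x => Set.indicator {n | b n ∈ Set.range (a x)} c with hd
  have hd0 : ∀ x n, 0 ≤ d x n := fun x n =>
    Set.indicator_nonneg (fun i _ => hc0 i) n
  have hdle : ∀ x n, d x n ≤ c n := fun x n =>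
    Set.indicator_le_self' (fun i _ => hc0 i) n
  refine ⟨d, ?_, ?_, ?_⟩
  · -- each d x is in divs
    intro x
    refine ⟨hd0 x, squeeze_zero (hd0 x) (hdle x) hclim, ?_⟩
    have hmono : Monotone fun M => ∑ n ∈ Finset.range M, d x n := by
      apply monotone_nat_of_le_succ
      intro M
      rw [Finset.sum_range_succ]
      exact le_add_of_nonneg_right (hd0 x _)
    apply tendsto_atTop_atTop_of_monotone hmono
    intro r
    set F : Finset ℕ := Finset.image (a x) (Finset.range ⌈r⌉₊) with hF
    set K : ℕ := F.sup id + 1 with hK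
    refine ⟨N K, ?_⟩
    have hFcard : F.card = ⌈r⌉₊ := by
      rw [hF, Finset.card_image_of_injective _ (ha_inj x), Finset.card_range]
    have hblocksum : ∀ k ∈ F, (1 : ℝ) ≤ ∑ n ∈ Finset.Ico (N k) (N (k + 1)), d x n := by
      intro k hk
      have hmem : k ∈ Set.range (a x) := by
        obtain ⟨i, _, rfl⟩ := Finset.mem_image.mp hk
        exact ⟨i, rfl⟩
      have heq : ∀ n ∈ Finset.Ico (N k) (N (k + 1)), d x n = c n := by
        intro n hn
        rw [Finset.mem_Ico] at hn
        have hbn : b n = k := hb_eq k n hn.1 hn.2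
        have : n ∈ {n | b n ∈ Set.range (a x)} := by
          simp only [Set.mem_setOf_eq, hbn]; exact hmem
        exact Set.indicator_of_mem this c
      rw [Finset.sum_congr rfl heq]
      exact hNblock k
    have hdisj : (↑F : Set ℕ).PairwiseDisjoint fun k => Finset.Ico (N k) (N (k + 1)) := by
      intro k _ k' _ hne
      apply Finset.disjoint_left.mpr
      intro n hn hn'
      rw [Finset.mem_Ico] at hn hn'
      rcases hne.lt_or_gt with h | h
      · exact absurd (lt_of_lt_of_le hn.2 (le_trans (hNmono.le_iff_le.mpr h) hn'.1))
          (lt_irrefl n)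
      · exact absurd (lt_of_lt_of_le hn'.2 (le_trans (hNmono.le_iff_le.mpr h) hn.1))
          (lt_irrefl n)
    have hsub : F.biUnion (fun k => Finset.Ico (N k) (N (k + 1))) ⊆ Finset.range (N K) := by
      intro n hn
      obtain ⟨k, hkF, hkn⟩ := Finset.mem_biUnion.mp hn
      rw [Finset.mem_Ico] at hkn
      rw [Finset.mem_range]
      have hkK : k + 1 ≤ K := by
        have := Finset.le_sup (f := id) hkF
        simp only [id] at this
        omega
      exact lt_of_lt_of_le hkn.2 (hNmono.le_iff_le.mpr hkK)
    calc r ≤ (⌈r⌉₊ : ℝ) := Nat.le_ceil r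
      _ = F.card • (1 : ℝ) := by rw [hFcard]; simp
      _ ≤ ∑ k ∈ F, ∑ n ∈ Finset.Ico (N k) (N (k + 1)), d x n :=
          Finset.card_nsmul_le_sum F _ 1 hblocksum
      _ = ∑ n ∈ F.biUnion (fun k => Finset.Ico (N k) (N (k + 1))), d x n :=
          (Finset.sum_biUnion hdisj).symm
      _ ≤ ∑ n ∈ Finset.range (N K), d x n :=
          Finset.sum_le_sum_of_subset_of_nonneg hsub (fun i _ _ => hd0 x i)
  · -- each d x is below c
    intro x
    exact Eventually.of_forall fun n => hdle x n
  · -- pairwise incompatibility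
    rintro x y hxy ⟨e, ⟨he0, helim, hediv⟩, hex, hey⟩
    have hfin : (Set.range (a x) ∩ Set.range (a y)).Finite := by
      rcases hxy.lt_or_gt with h | h
      · exact hAD x y h
      · rw [Set.inter_comm]; exact hAD y x h
    obtain ⟨K, hKub⟩ := hfin.bddAbove
    have hev : ∀ᶠ n in atTop, e n = 0 := by
      filter_upwards [hex, hey, eventually_ge_atTop (N (K + 1))] with n h1 h2 h3
      have hbn : K + 1 ≤ b n := hb_ge (K + 1) n h3
      have hnotin : b n ∉ Set.range (a x) ∩ Set.range (a y) := by
        intro hmem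
        have := hKub hmem
        omega
      have h' : b n ∉ Set.range (a x) ∨ b n ∉ Set.range (a y) := by
        by_contra h
        push_neg at h
        exact hnotin ⟨h.1, h.2⟩
      rcases h' with h | h
      · have hz : d x n = 0 :=
          Set.indicator_of_notMem (show n ∉ {n | b n ∈ Set.range (a x)} from h) c
        have : e n ≤ 0 := le_of_le_of_eq h1 hz
        exact le_antisymm this (he0 n)
      · have hz : d y n = 0 :=
          Set.indicator_of_notMem (show n ∉ {n | b n ∈ Set.range (a y)} from h) c
        have : e n ≤ 0 := le_of_le_of_eq h2 hz
        exact le_antisymm this (he0 n)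
    obtain ⟨M, hM⟩ := eventually_atTop.mp hev
    have hbound : ∀ L, ∑ n ∈ Finset.range L, e n ≤ ∑ n ∈ Finset.range M, e n := by
      intro L
      rcases le_total L M with h | h
      · exact Finset.sum_le_sum_of_subset_of_nonneg (Finset.range_subset_range.mpr h)
          (fun i _ _ => he0 i)
      · have hsplit : ∑ n ∈ Finset.range L, e n
            = ∑ n ∈ Finset.range M, e n + ∑ n ∈ Finset.Ico M L, e n := by
          rw [Finset.range_eq_Ico, Finset.range_eq_Ico]
          exact (Finset.sum_Ico_consecutive _ (Nat.zero_le M) h).symm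
        rw [hsplit]
        have hzero : ∑ n ∈ Finset.Ico M L, e n = 0 :=
          Finset.sum_eq_zero fun n hn => hM n (Finset.mem_Ico.mp hn).1
        rw [hzero, add_zero]
    obtain ⟨L, hL⟩ :=
      (hediv.eventually (eventually_ge_atTop ((∑ n ∈ Finset.range M, e n) + 1))).exists
    linarith [hbound L]
end

section
/- For every set H ⊆ ℕ, the set D_H = { ā ∈ divs : ∑_{ℓ∈H} a_ℓ < ∞ or ∑_{ℓ∈ℕ\H} a_ℓ < ∞ } is open in (divs, ≤*) (if ā ∈ D_H, b̄ ∈ divs and b̄ ≤* ā, then b̄ ∈ D_H), dense in (divs, ≤*) (for every c̄ ∈ divs there is ā ∈ D_H with ā ≤* c̄), and closed under ≈ (if ā ∈ D_H and b̄ ≈ ā, then b̄ ∈ D_H). -/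
open Filter

/-- Compatibility in `(divs, ≤*)`: a common lower bound in `divs`. -/
def DivsCompat (c d : ℕ → ℝ) : Prop := ∃ e, Divs e ∧ LeStar e c ∧ LeStar e d

/-- The equivalence `≈` on `divs`: `c ≈ d` iff they are incompatible with the
same elements of `divs`. -/
def DivsEquiv (c d : ℕ → ℝ) : Prop :=
  ∀ e, Divs e → (DivsCompat e c ↔ DivsCompat e d)

/-- Membership in `D_H = { a ∈ divs : ∑_{ℓ∈H} a_ℓ < ∞ or ∑_{ℓ∈ℕ\H} a_ℓ < ∞ }`. -/
def MemDH (H : Set ℕ) (a : ℕ → ℝ) : Prop :=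
  Divs a ∧ (Summable (H.indicator a) ∨ Summable (Hᶜ.indicator a))

/-- Comparison test with eventual domination. -/
lemma summable_of_eventually_le {f g : ℕ → ℝ} (hf : ∀ n, 0 ≤ f n)
    (h : ∀ᶠ n in atTop, f n ≤ g n) (hg : Summable g) : Summable f := by
  refine summable_of_isBigO_nat hg (Asymptotics.IsBigO.of_bound 1 ?_)
  filter_upwards [h] with n hn
  rw [one_mul, Real.norm_of_nonneg (hf n)]
  exact hn.trans (le_abs_self _)

/-- If a restriction of an element of `divs` still diverges, it is in `divs`. -/
lemma divs_indicator {c : ℕ → ℝ} (hc : Divs c) (S : Set ℕ)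
    (hdiv : ¬ Summable (S.indicator c)) : Divs (S.indicator c) := by
  obtain ⟨h0, hlim, _⟩ := hc
  have hnn : ∀ n, 0 ≤ S.indicator c n := fun n =>
    Set.indicator_apply_nonneg (fun _ => h0 n)
  refine ⟨hnn, ?_, ?_⟩
  · exact squeeze_zero hnn (fun n => Set.indicator_apply_le' (fun _ => le_rfl) (fun _ => h0 n)) hlim
  · by_contra h
    exact hdiv ((summable_iff_not_tendsto_nat_atTop_of_nonneg hnn).2 h)

/-- An element of `divs` is not summable. -/
lemma divs_not_summable {c : ℕ → ℝ} (hc : Divs c) : ¬ Summable c := fun hs =>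
  (summable_iff_not_tendsto_nat_atTop_of_nonneg hc.1).1 hs hc.2.2

/-- Key step: if the `S`-restriction of `a` is summable and the `S`-restriction of
`b` diverges, then `b` is compatible with something incompatible with `a`. -/
lemma key_step {a b : ℕ → ℝ} (S : Set ℕ) (_ha : Divs a) (hb : Divs b)
    (hsa : Summable (S.indicator a)) (hsb : ¬ Summable (S.indicator b))
    (heq : DivsEquiv b a) : False := by
  set e := S.indicator b with he
  have hde : Divs e := divs_indicator hb S hsb
  have hcb : DivsCompat e b := by
    refine ⟨e, hde, Eventually.of_forall fun n => le_rfl,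
      Eventually.of_forall fun n => Set.indicator_apply_le' (fun _ => le_rfl) (fun _ => hb.1 n)⟩
  obtain ⟨f, hdf, hfe, hfa⟩ := (heq e hde).1 hcb
  have hfsum : Summable f := by
    refine summable_of_eventually_le hdf.1 ?_ hsa
    filter_upwards [hfe, hfa] with n h1 h2
    by_cases hn : n ∈ S
    · simpa [Set.indicator_of_mem hn] using h2
    · simpa [he, Set.indicator_of_notMem hn] using h1
  exact divs_not_summable hdf hfsum

/-- For every `H ⊆ ℕ`, the set `D_H` is open, dense, and closed under `≈`
in `(divs, ≤*)`. -/
theorem DH_open_dense_closedEquiv (H : Set ℕ) :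
    (∀ a, MemDH H a → ∀ b, Divs b → LeStar b a → MemDH H b) ∧
    (∀ c, Divs c → ∃ a, MemDH H a ∧ LeStar a c) ∧
    (∀ a, MemDH H a → ∀ b, Divs b → DivsEquiv b a → MemDH H b) := by
  refine ⟨?_, ?_, ?_⟩
  · rintro a ⟨_, ha⟩ b hb hba
    refine ⟨hb, ?_⟩
    have key : ∀ S : Set ℕ, Summable (S.indicator a) → Summable (S.indicator b) := by
      intro S hS
      refine summable_of_eventually_le
        (fun n => Set.indicator_apply_nonneg (fun _ => hb.1 n)) ?_ hS
      filter_upwards [hba] with n hn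
      by_cases hmem : n ∈ S <;>
        simp [Set.indicator_of_mem, Set.indicator_of_notMem, hn, hmem]
    exact ha.imp (key H) (key Hᶜ)
  · intro c hc
    by_cases h1 : Summable (H.indicator c)
    · exact ⟨c, ⟨hc, Or.inl h1⟩, Eventually.of_forall fun n => le_rfl⟩
    by_cases h2 : Summable (Hᶜ.indicator c)
    · exact ⟨c, ⟨hc, Or.inr h2⟩, Eventually.of_forall fun n => le_rfl⟩
    refine ⟨H.indicator c, ⟨divs_indicator hc H h1, Or.inr ?_⟩,
      Eventually.of_forall fun n => Set.indicator_apply_le' (fun _ => le_rfl) (fun _ => hc.1 n)⟩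
    have : Hᶜ.indicator (H.indicator c) = fun _ => (0 : ℝ) := by
      funext n
      by_cases hn : n ∈ H <;>
        simp [Set.indicator_of_mem, Set.indicator_of_notMem, hn]
    rw [this]
    exact summable_zero
  · rintro a ⟨hda, ha⟩ b hb heq
    refine ⟨hb, ?_⟩
    by_contra h
    push_neg at h
    rcases ha with hs | hs
    · exact key_step H hda hb hs h.1 heq
    · exact key_step Hᶜ hda hb hs h.2 heq
end

section
/- Let (m_i)_{i∈ℕ} be a strictly increasing sequence of natural numbers, and for each i ≥ 1 let y_i be a set of functions s : [m_i, m_{i+1}) → ℝ, and set w_i = { s ∈ y_i : ∑_{ℓ∈[m_i,m_{i+1})} s(ℓ) > 1/i² }. Then for every ē ∈ divs such that the restriction ē↾[m_i, m_{i+1}) belongs to y_i for all but finitely many i, there exists an infinite set A ⊆ ℕ such that for every i ∈ A \ {0} the restriction ē↾[m_i, m_{i+1}) belongs to w_i, and ∑_{i∈A} ∑_{ℓ∈[m_i,m_{i+1})} e_ℓ = ∞. -/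
open Filter

/-- If `ē ∈ divs` and the restriction `ē↾[m_i, m_{i+1})` lies in `y_i` for all but
finitely many `i`, then there is an infinite `A ⊆ ℕ` such that for every nonzero
`i ∈ A` the restriction lies in
`w_i = { s ∈ y_i : ∑_{ℓ∈[m_i,m_{i+1})} s(ℓ) > 1/i² }`, and
`∑_{i∈A} ∑_{ℓ∈[m_i,m_{i+1})} e_ℓ = ∞`. -/
theorem exists_infinite_divergent_selector (m : ℕ → ℕ) (hm : StrictMono m)
    (y : (i : ℕ) → Set ((Set.Ico (m i) (m (i + 1))) → ℝ))
    (e : ℕ → ℝ) (he : Divs e)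
    (hey : ∀ᶠ i in atTop, (fun ℓ : Set.Ico (m i) (m (i + 1)) => e ℓ) ∈ y i) :
    ∃ A : Set ℕ, A.Infinite ∧
      (∀ i ∈ A, i ≠ 0 →
        (fun ℓ : Set.Ico (m i) (m (i + 1)) => e ℓ) ∈ y i ∧
        1 / (i : ℝ) ^ 2 < ∑ ℓ ∈ Finset.Ico (m i) (m (i + 1)), e ℓ) ∧
      Tendsto (fun N => ∑ i ∈ Finset.range N,
          A.indicator (fun j => ∑ ℓ ∈ Finset.Ico (m j) (m (j + 1)), e ℓ) i)
        atTop atTop := by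
  obtain ⟨hpos, _, hdiv⟩ := he
  set s : ℕ → ℝ := fun j => ∑ ℓ ∈ Finset.Ico (m j) (m (j + 1)), e ℓ with hs_def
  have hs : ∀ i, 0 ≤ s i := fun i => Finset.sum_nonneg fun ℓ _ => hpos ℓ
  obtain ⟨N₀, hN₀⟩ := eventually_atTop.mp hey
  -- the set A
  set A : Set ℕ := {i | i ≠ 0 ∧ (fun ℓ : Set.Ico (m i) (m (i + 1)) => e ℓ) ∈ y i ∧
      1 / (i : ℝ) ^ 2 < s i} with hA_def
  set f : ℕ → ℝ := A.indicator s with hf_def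
  have hf_nonneg : ∀ i, 0 ≤ f i := fun i => Set.indicator_nonneg (fun j _ => hs j) i
  -- partial sums of s diverge
  have hsum_s : ∀ N, ∑ i ∈ Finset.range N, s i = ∑ ℓ ∈ Finset.Ico (m 0) (m N), e ℓ := by
    intro N
    induction N with
    | zero => simp
    | succ N ih =>
      rw [Finset.sum_range_succ, ih, Finset.sum_Ico_consecutive]
      · exact hm.monotone (Nat.zero_le _)
      · exact hm.monotone (Nat.le_succ _)
  have hs_div : Tendsto (fun N => ∑ i ∈ Finset.range N, s i) atTop atTop := by
    have h1 : Tendsto (fun N => ∑ ℓ ∈ Finset.range (m N), e ℓ) atTop atTop :=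
      hdiv.comp hm.tendsto_atTop
    have h2 : Tendsto (fun N => ∑ ℓ ∈ Finset.range (m N), e ℓ
        - ∑ ℓ ∈ Finset.range (m 0), e ℓ) atTop atTop :=
      tendsto_atTop_add_const_right _ _ h1
    refine h2.congr fun N => ?_
    rw [hsum_s, Finset.sum_Ico_eq_sub _ (hm.monotone (Nat.zero_le _))]
  -- summability of 1/i^2
  have hsummable : Summable (fun i : ℕ => 1 / (i : ℝ) ^ 2) :=
    Real.summable_one_div_nat_pow.mpr one_lt_two
  set T : ℝ := ∑' i : ℕ, 1 / (i : ℝ) ^ 2 with hT_def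
  have hsq_nonneg : ∀ i : ℕ, (0:ℝ) ≤ 1 / (i : ℝ) ^ 2 := fun i => by positivity
  have hT_bound : ∀ N, ∑ i ∈ Finset.range N, 1 / (i : ℝ) ^ 2 ≤ T := fun N =>
    Summable.sum_le_tsum _ (fun i _ => hsq_nonneg i) hsummable
  set C₁ : ℝ := ∑ i ∈ Finset.range (N₀ + 1), s i with hC₁_def
  -- pointwise bound on s - f
  have hkey : ∀ i, s i - f i ≤ (if i < N₀ + 1 then s i else 0) + 1 / (i : ℝ) ^ 2 := by
    intro i
    by_cases hiA : i ∈ A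
    · have : f i = s i := Set.indicator_of_mem hiA _
      rw [this]
      have : (0:ℝ) ≤ (if i < N₀ + 1 then s i else 0) := by
        split <;> [exact hs i; exact le_refl 0]
      linarith [hsq_nonneg i]
    · have hf0 : f i = 0 := Set.indicator_of_notMem hiA _
      rw [hf0, sub_zero]
      by_cases hlt : i < N₀ + 1
      · simp only [if_pos hlt]
        linarith [hsq_nonneg i]
      · simp only [if_neg hlt]
        push_neg at hlt
        have hi0 : i ≠ 0 := by omega
        have hiy : (fun ℓ : Set.Ico (m i) (m (i + 1)) => e ℓ) ∈ y i := hN₀ i (by omega)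
        have : ¬ (1 / (i : ℝ) ^ 2 < s i) := fun h => hiA ⟨hi0, hiy, h⟩
        push_neg at this
        linarith
  -- bound the partial sums of the truncated part
  have hcut : ∀ N, ∑ i ∈ Finset.range N, (if i < N₀ + 1 then s i else 0) ≤ C₁ := by
    intro N
    rw [← Finset.sum_filter]
    refine Finset.sum_le_sum_of_subset_of_nonneg ?_ (fun i _ _ => hs i)
    intro i hi
    simp only [Finset.mem_filter, Finset.mem_range] at hi ⊢
    exact hi.2
  have hlower : ∀ N, (∑ i ∈ Finset.range N, s i) - (C₁ + T) ≤ ∑ i ∈ Finset.range N, f i := by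
    intro N
    have h1 : ∑ i ∈ Finset.range N, (s i - f i)
        ≤ ∑ i ∈ Finset.range N, ((if i < N₀ + 1 then s i else 0) + 1 / (i : ℝ) ^ 2) :=
      Finset.sum_le_sum fun i _ => hkey i
    rw [Finset.sum_sub_distrib, Finset.sum_add_distrib] at h1
    have := hcut N
    have := hT_bound N
    linarith
  have hf_div : Tendsto (fun N => ∑ i ∈ Finset.range N, f i) atTop atTop := by
    refine tendsto_atTop_mono hlower ?_
    exact tendsto_atTop_add_const_right _ _ hs_div
  refine ⟨A, ?_, ?_, hf_div⟩
  · -- A is infinite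
    intro hfin
    have hbound : ∀ N, ∑ i ∈ Finset.range N, f i ≤ ∑ i ∈ hfin.toFinset, s i := by
      intro N
      have : ∀ i ∈ Finset.range N, f i = if i ∈ hfin.toFinset then s i else 0 := by
        intro i _
        by_cases hiA : i ∈ A
        · rw [hf_def, Set.indicator_of_mem hiA, if_pos (hfin.mem_toFinset.mpr hiA)]
        · rw [hf_def, Set.indicator_of_notMem hiA,
            if_neg (fun h => hiA (hfin.mem_toFinset.mp h))]
      rw [Finset.sum_congr rfl this, ← Finset.sum_filter]
      refine Finset.sum_le_sum_of_subset_of_nonneg ?_ (fun i _ _ => hs i)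
      intro i hi
      exact (Finset.mem_filter.mp hi).2
    obtain ⟨N, hN⟩ := (hf_div.eventually_gt_atTop (∑ i ∈ hfin.toFinset, s i)).exists
    exact absurd (hbound N) (not_le.mpr hN)
  · rintro i ⟨hi0, hiy, hilt⟩ _
    exact ⟨hiy, hilt⟩
end

section
/- Let s be a finite set, let ε > 0, and let d : s → ℝ satisfy 0 ≤ d(ℓ) ≤ ε for all ℓ ∈ s, with D = ∑_{ℓ∈s} d(ℓ) > 0. Under the uniform probability measure on the set of all functions χ : s → {0,1} (equivalently, each coordinate is 0 or 1 independently with probability 1/2), the probability that the random variable X(χ) = (∑_{ℓ∈s, χ(ℓ)=1} d(ℓ)) / D satisfies X < 1/3 or X > 2/3 is at most 18ε/D. -/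
open Finset

private noncomputable def eb (b : Bool) : ℝ := if b then 1/2 else -(1/2)

private lemma eb_not (b : Bool) : eb (!b) = - eb b := by cases b <;> norm_num [eb]

private lemma eb_sq (b : Bool) : eb b * eb b = 1/4 := by cases b <;> norm_num [eb]

private lemma sum_eb_mul_eb {ι : Type*} [Fintype ι] [DecidableEq ι] (i j : ι) (hij : i ≠ j) :
    ∑ χ : ι → Bool, eb (χ i) * eb (χ j) = 0 := by
  have hinv : Function.Involutive (fun χ : ι → Bool => Function.update χ i (!χ i)) := by
    intro χ
    funext k
    by_cases hk : k = i
    · subst hk; simp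
    · simp [Function.update_of_ne hk]
  have h := Equiv.sum_comp (Function.Involutive.toPerm _ hinv) (fun χ : ι → Bool => eb (χ i) * eb (χ j))
  have hterm : ∀ χ : ι → Bool,
      eb (((Function.Involutive.toPerm _ hinv) χ) i) * eb (((Function.Involutive.toPerm _ hinv) χ) j) = -(eb (χ i) * eb (χ j)) := by
    intro χ
    have h1 : ((Function.Involutive.toPerm _ hinv) χ) i = !χ i := by simp [Function.Involutive.toPerm]
    have h2 : ((Function.Involutive.toPerm _ hinv) χ) j = χ j := by
      simp [Function.Involutive.toPerm, Function.update_of_ne (Ne.symm hij)]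
    rw [h1, h2, eb_not]; ring
  rw [Finset.sum_congr rfl (fun χ _ => hterm χ), Finset.sum_neg_distrib] at h
  linarith

/-- Chebyshev-type estimate for a random partition: if `0 ≤ d ℓ ≤ ε` on a finite
set `s` and `D = ∑_{ℓ∈s} d ℓ > 0`, then under the uniform measure on `{0,1}^s`
(each of the `2^|s|` functions equally likely), the probability that
`X(χ) = (∑_{ℓ∈s, χ ℓ = 1} d ℓ)/D` is `< 1/3` or `> 2/3` is at most `18ε/D`. -/
theorem random_half_sum_concentration (s : Finset ℕ) (ε : ℝ) (hε : 0 < ε)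
    (d : ℕ → ℝ) (hd : ∀ ℓ ∈ s, 0 ≤ d ℓ ∧ d ℓ ≤ ε)
    (hD : 0 < ∑ ℓ ∈ s, d ℓ) :
    (Nat.card {χ : {ℓ // ℓ ∈ s} → Bool //
        (∑ ℓ : {ℓ // ℓ ∈ s}, if χ ℓ then d ℓ else 0) / (∑ ℓ ∈ s, d ℓ) < 1 / 3 ∨
        2 / 3 < (∑ ℓ : {ℓ // ℓ ∈ s}, if χ ℓ then d ℓ else 0) / (∑ ℓ ∈ s, d ℓ)} : ℝ) /
      2 ^ s.card ≤ 18 * ε / (∑ ℓ ∈ s, d ℓ) := by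
  classical
  set ι := {ℓ // ℓ ∈ s}
  set D : ℝ := ∑ ℓ ∈ s, d ℓ with hDdef
  set X : (ι → Bool) → ℝ := fun χ => ∑ ℓ : ι, if χ ℓ then d ℓ else 0 with hX
  have hDsub : (∑ i : ι, d i) = D := Finset.sum_coe_sort s d
  -- centered sum
  have hcent : ∀ χ : ι → Bool, X χ - D/2 = ∑ i : ι, eb (χ i) * d i := by
    intro χ
    have : X χ - D/2 = ∑ i : ι, ((if χ i then d i else 0) - d i / 2) := by
      rw [Finset.sum_sub_distrib, ← Finset.sum_div, hDsub]
    rw [this]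
    refine Finset.sum_congr rfl fun i _ => ?_
    cases h : χ i <;> simp [eb] <;> ring
  -- variance computation
  have hvar : ∑ χ : ι → Bool, (X χ - D/2)^2 = (2:ℝ)^s.card / 4 * ∑ i : ι, (d i)^2 := by
    have hcard : Fintype.card (ι → Bool) = 2 ^ s.card := by
      rw [Fintype.card_fun]; rw [show Fintype.card ι = s.card from Fintype.card_coe s]; rfl
    calc ∑ χ : ι → Bool, (X χ - D/2)^2
        = ∑ χ : ι → Bool, ∑ i : ι, ∑ j : ι, (eb (χ i) * d i) * (eb (χ j) * d j) := by
          refine Finset.sum_congr rfl fun χ _ => ?_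
          rw [hcent, sq, Finset.sum_mul_sum]
      _ = ∑ i : ι, ∑ j : ι, ∑ χ : ι → Bool, (eb (χ i) * d i) * (eb (χ j) * d j) := by
          rw [Finset.sum_comm]
          exact Finset.sum_congr rfl fun i _ => Finset.sum_comm
      _ = ∑ i : ι, ∑ j : ι, (d i * d j) * ∑ χ : ι → Bool, eb (χ i) * eb (χ j) := by
          refine Finset.sum_congr rfl fun i _ => Finset.sum_congr rfl fun j _ => ?_
          rw [Finset.mul_sum]
          exact Finset.sum_congr rfl fun χ _ => by ring
      _ = ∑ i : ι, (d i * d i) * ((2:ℝ)^s.card / 4) := by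
          refine Finset.sum_congr rfl fun i _ => ?_
          rw [Finset.sum_eq_single i]
          · congr 1
            have : ∑ χ : ι → Bool, eb (χ i) * eb (χ i)
                = ∑ χ : ι → Bool, (1:ℝ)/4 := by
              exact Finset.sum_congr rfl fun χ _ => eb_sq _
            rw [this, Finset.sum_const, Finset.card_univ, hcard]
            push_cast
            ring
          · intro j _ hj
            rw [sum_eb_mul_eb i j (Ne.symm hj), mul_zero]
          · intro h; exact absurd (Finset.mem_univ i) h
      _ = (2:ℝ)^s.card / 4 * ∑ i : ι, (d i)^2 := by
          rw [Finset.mul_sum]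
          exact Finset.sum_congr rfl fun i _ => by ring
  -- bound ∑ d i ^2 ≤ ε * D
  have hsq : ∑ i : ι, (d i)^2 ≤ ε * D := by
    have : ∑ i : ι, (d i)^2 ≤ ∑ i : ι, ε * d i := by
      refine Finset.sum_le_sum fun i _ => ?_
      obtain ⟨h0, h1⟩ := hd i i.2
      nlinarith
    rw [← Finset.mul_sum, hDsub] at this
    exact this
  -- the bad set as a filter
  set P : (ι → Bool) → Prop := fun χ => X χ / D < 1/3 ∨ 2/3 < X χ / D with hP
  have hNat : (Nat.card {χ : ι → Bool // P χ} : ℝ)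
      = ((Finset.univ.filter P).card : ℝ) := by
    rw [Nat.card_eq_fintype_card, Fintype.card_subtype]
  -- each bad χ has (X χ - D/2)^2 ≥ (D/6)^2
  have hbad : ∀ χ ∈ Finset.univ.filter P, (D/6)^2 ≤ (X χ - D/2)^2 := by
    intro χ hχ
    rw [Finset.mem_filter] at hχ
    rcases hχ.2 with h | h
    · have : X χ < D/3 := by
        rw [div_lt_iff₀ hD] at h; linarith
      nlinarith [sq_nonneg (X χ - D/2 + D/6)]
    · have : 2/3 * D < X χ := by
        rw [lt_div_iff₀ hD] at h; linarith
      nlinarith [sq_nonneg (X χ - D/2 - D/6)]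
  -- Chebyshev counting
  have hcount : ((Finset.univ.filter P).card : ℝ) * (D/6)^2
      ≤ (2:ℝ)^s.card / 4 * (ε * D) := by
    calc ((Finset.univ.filter P).card : ℝ) * (D/6)^2
        = ∑ _χ ∈ Finset.univ.filter P, (D/6)^2 := by
          rw [Finset.sum_const, nsmul_eq_mul]
      _ ≤ ∑ χ ∈ Finset.univ.filter P, (X χ - D/2)^2 := Finset.sum_le_sum hbad
      _ ≤ ∑ χ : ι → Bool, (X χ - D/2)^2 := by
          refine Finset.sum_le_sum_of_subset_of_nonneg (Finset.filter_subset _ _)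
            fun χ _ _ => sq_nonneg _
      _ = (2:ℝ)^s.card / 4 * ∑ i : ι, (d i)^2 := hvar
      _ ≤ (2:ℝ)^s.card / 4 * (ε * D) := by
          apply mul_le_mul_of_nonneg_left hsq
          positivity
  -- finish
  have h2pos : (0:ℝ) < 2 ^ s.card := by positivity
  rw [hNat, div_le_div_iff₀ h2pos hD]
  nlinarith [hcount, sq_nonneg D, mul_pos h2pos hε,
    mul_nonneg (Nat.cast_nonneg (Finset.univ.filter P).card) hε.le]
end

section
/- Assume β > 0 and that m < m' < m'' are natural numbers with m' > 2^m and m'' > 2^{m'}. Let w be a set of functions d̄ = ⟨d_ℓ : m' ≤ ℓ < m''⟩ such that each d_ℓ belongs to { j/2^{m''} : 0 ≤ j ≤ 2^{m''−m} }, such that every d̄ ∈ w satisfies ∑_{ℓ∈[m',m'')} d_ℓ ≥ 1/β, and such that |w| ≤ 2^{m−2}/(36β). Then there exists a partition (u_0, u_1) of the interval [m', m'') such that for every d̄ ∈ w and every h ∈ {0,1}: 1/3 ≤ (∑_{ℓ∈u_h} d_ℓ) / (∑_{ℓ∈[m',m'')} d_ℓ) ≤ 2/3. -/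
open Finset

lemma sum_sq_identity (f : ℕ → ℝ) (I : Finset ℕ) :
    ∑ u ∈ I.powerset, (∑ ℓ ∈ I, (if ℓ ∈ u then f ℓ else 0) - (∑ ℓ ∈ I, f ℓ)/2)^2
      = 2 ^ I.card * (∑ ℓ ∈ I, f ℓ^2) / 4 := by
  induction I using Finset.induction_on with
  | empty => simp
  | @insert a I' ha ih =>
    have hinj : ∀ u ∈ I'.powerset, ∀ v ∈ I'.powerset, insert a u = insert a v → u = v := by
      intro u hu v hv h
      have hau : a ∉ u := fun h' => ha (Finset.mem_powerset.1 hu h')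
      have hav : a ∉ v := fun h' => ha (Finset.mem_powerset.1 hv h')
      rw [← Finset.erase_insert hau, ← Finset.erase_insert hav, h]
    have hdisj : Disjoint I'.powerset (I'.powerset.image (insert a)) := by
      rw [Finset.disjoint_left]
      intro u hu hu'
      obtain ⟨v, hv, rfl⟩ := Finset.mem_image.1 hu'
      exact ha (Finset.mem_powerset.1 hu (Finset.mem_insert_self a v))
    rw [Finset.powerset_insert, Finset.sum_union hdisj, Finset.sum_image hinj,
        ← Finset.sum_add_distrib]
    have hS : ∑ ℓ ∈ insert a I', f ℓ = f a + ∑ ℓ ∈ I', f ℓ := Finset.sum_insert ha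
    have key : ∀ u ∈ I'.powerset,
        (∑ ℓ ∈ insert a I', (if ℓ ∈ u then f ℓ else 0) - (∑ ℓ ∈ insert a I', f ℓ)/2)^2
        + (∑ ℓ ∈ insert a I', (if ℓ ∈ insert a u then f ℓ else 0)
            - (∑ ℓ ∈ insert a I', f ℓ)/2)^2
        = 2 * ((∑ ℓ ∈ I', (if ℓ ∈ u then f ℓ else 0)) - (∑ ℓ ∈ I', f ℓ)/2)^2
          + f a ^2 / 2 := by
      intro u hu
      have h1 : (∑ ℓ ∈ insert a I', (if ℓ ∈ u then f ℓ else 0))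
          = ∑ ℓ ∈ I', (if ℓ ∈ u then f ℓ else 0) := by
        rw [Finset.sum_insert ha, if_neg (fun h => ha ((Finset.mem_powerset.1 hu) h))]
        ring
      have h2 : (∑ ℓ ∈ insert a I', (if ℓ ∈ insert a u then f ℓ else 0))
          = f a + ∑ ℓ ∈ I', (if ℓ ∈ u then f ℓ else 0) := by
        rw [Finset.sum_insert ha, if_pos (Finset.mem_insert_self a u)]
        congr 1
        refine Finset.sum_congr rfl fun ℓ hℓ => ?_
        have : ℓ ≠ a := fun h => ha (h ▸ hℓ)
        simp [Finset.mem_insert, this]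
      rw [h1, h2, hS]; ring
    rw [Finset.sum_congr rfl key, Finset.sum_add_distrib, ← Finset.mul_sum, ih,
        Finset.sum_const, Finset.card_powerset, Finset.card_insert_of_notMem ha,
        Finset.sum_insert ha]
    ring


/-- Lemma 4.2: given `β > 0`, natural numbers `m < m' < m''` with `m' > 2^m` and
`m'' > 2^{m'}`, and a set `w` of functions `d : [m',m'') → ℝ` taking values in
`{ j/2^{m''} : 0 ≤ j ≤ 2^{m''−m} }`, each with `∑_{ℓ∈[m',m'')} d ℓ ≥ 1/β`, and with
`|w| ≤ 2^{m−2}/(36β)`, there is a partition `(u₀, u₁)` of `[m', m'')` such that for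
every `d ∈ w` and each part `u` of the partition,
`1/3 ≤ (∑_{ℓ∈u} d ℓ)/(∑_{ℓ∈[m',m'')} d ℓ) ≤ 2/3`. -/
theorem exists_balanced_partition (β : ℝ) (hβ : 0 < β) (m m' m'' : ℕ)
    (hmm' : m < m') (hm'm'' : m' < m'') (h2m : 2 ^ m < m') (h2m' : 2 ^ m' < m'')
    (w : Set ((Set.Ico m' m'') → ℝ))
    (hval : ∀ d ∈ w, ∀ ℓ : Set.Ico m' m'',
      ∃ j : ℕ, j ≤ 2 ^ (m'' - m) ∧ d ℓ = (j : ℝ) / 2 ^ m'')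
    (hsum : ∀ d ∈ w, 1 / β ≤ ∑ ℓ : Set.Ico m' m'', d ℓ)
    (hcard : (Nat.card w : ℝ) ≤ (2 : ℝ) ^ ((m : ℤ) - 2) / (36 * β)) :
    ∃ u₀ u₁ : Finset ℕ, u₀ ∪ u₁ = Finset.Ico m' m'' ∧ u₀ ∩ u₁ = ∅ ∧
      ∀ d ∈ w, ∀ u ∈ ({u₀, u₁} : Set (Finset ℕ)),
        1 / 3 ≤ (∑ ℓ : Set.Ico m' m'', if (ℓ : ℕ) ∈ u then d ℓ else 0) /
            (∑ ℓ : Set.Ico m' m'', d ℓ) ∧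
        (∑ ℓ : Set.Ico m' m'', if (ℓ : ℕ) ∈ u then d ℓ else 0) /
            (∑ ℓ : Set.Ico m' m'', d ℓ) ≤ 2 / 3 := by

  classical
  set I : Finset ℕ := Finset.Ico m' m'' with hIdef
  set F : ((Set.Ico m' m'') → ℝ) → ℕ → ℝ :=
    fun d ℓ => if h : ℓ ∈ Set.Ico m' m'' then d ⟨ℓ, h⟩ else 0 with hFdef
  have hmem : ∀ x, x ∈ I ↔ x ∈ Set.Ico m' m'' := by
    intro x; simp [hIdef, Set.mem_Ico]
  have hFd : ∀ (d : (Set.Ico m' m'') → ℝ) (ℓ : Set.Ico m' m''), F d ↑ℓ = d ℓ := by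
    intro d ℓ
    show (if h : (ℓ:ℕ) ∈ Set.Ico m' m'' then d ⟨ℓ, h⟩ else 0) = d ℓ
    rw [dif_pos ℓ.2]
  have hconv1 : ∀ d : (Set.Ico m' m'') → ℝ,
      (∑ ℓ : Set.Ico m' m'', d ℓ) = ∑ ℓ ∈ I, F d ℓ := by
    intro d
    rw [Finset.sum_subtype I hmem (F d)]
    exact Finset.sum_congr rfl fun ℓ _ => (hFd d ℓ).symm
  have hconv2 : ∀ (d : (Set.Ico m' m'') → ℝ) (u : Finset ℕ),
      (∑ ℓ : Set.Ico m' m'', if (ℓ : ℕ) ∈ u then d ℓ else 0)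
        = ∑ ℓ ∈ I, (if ℓ ∈ u then F d ℓ else 0) := by
    intro d u
    rw [Finset.sum_subtype I hmem (fun ℓ => if ℓ ∈ u then F d ℓ else 0)]
    exact Finset.sum_congr rfl fun ℓ _ => by rw [hFd]
  have hwfin : w.Finite := by
    have hsub : w ⊆ Set.pi Set.univ
        (fun _ : Set.Ico m' m'' =>
          (fun j : ℕ => (j : ℝ) / 2 ^ m'') '' Set.Iic (2 ^ (m'' - m))) := by
      intro d hd ℓ _
      obtain ⟨j, hj, hje⟩ := hval d hd ℓ
      exact ⟨j, hj, hje.symm⟩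
    exact (Set.Finite.pi fun _ => (Set.finite_Iic _).image _).subset hsub
  set W := hwfin.toFinset with hWdef
  have hWcard : (W.card : ℝ) ≤ (2 : ℝ) ^ ((m : ℤ) - 2) / (36 * β) := by
    rwa [hWdef, ← Nat.card_eq_card_finite_toFinset hwfin]
  set S : ((Set.Ico m' m'') → ℝ) → ℝ := fun d => ∑ ℓ ∈ I, F d ℓ with hSdef
  set T : ((Set.Ico m' m'') → ℝ) → Finset ℕ → ℝ :=
    fun d u => ∑ ℓ ∈ I, (if ℓ ∈ u then F d ℓ else 0) with hTdef
  have hSpos : ∀ d ∈ w, 0 < S d ∧ 1 / β ≤ S d := by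
    intro d hd
    have h := hsum d hd
    rw [hconv1 d] at h
    exact ⟨lt_of_lt_of_le (by positivity) h, h⟩
  have hFbound : ∀ d ∈ w, ∀ ℓ ∈ I, 0 ≤ F d ℓ ∧ F d ℓ ≤ 1 / 2 ^ m := by
    intro d hd ℓ hℓ
    have hℓ' : ℓ ∈ Set.Ico m' m'' := (hmem ℓ).1 hℓ
    obtain ⟨j, hj, hje⟩ := hval d hd ⟨ℓ, hℓ'⟩
    have hF : F d ℓ = (j : ℝ) / 2 ^ m'' := by
      show (if h : ℓ ∈ Set.Ico m' m'' then d ⟨ℓ, h⟩ else 0) = (j : ℝ) / 2 ^ m''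
      rw [dif_pos hℓ']
      exact hje
    constructor
    · rw [hF]; positivity
    · rw [hF, div_le_div_iff₀ (by positivity) (by positivity)]
      have hmle : m ≤ m'' := le_of_lt (lt_trans hmm' hm'm'')
      have hpe : (2:ℝ) ^ (m'' - m) * 2 ^ m = 2 ^ m'' := by
        rw [← pow_add, Nat.sub_add_cancel hmle]
      have hjr : (j:ℝ) ≤ (2:ℝ) ^ (m'' - m) := by exact_mod_cast hj
      calc (j:ℝ) * 2 ^ m ≤ (2:ℝ) ^ (m'' - m) * 2 ^ m := by
            exact mul_le_mul_of_nonneg_right hjr (by positivity)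
        _ = 2 ^ m'' := hpe
        _ = 1 * 2 ^ m'' := (one_mul _).symm
  have hsq : ∀ d ∈ w, ∑ ℓ ∈ I, (F d ℓ)^2 ≤ (1 / 2 ^ m) * S d := by
    intro d hd
    rw [Finset.mul_sum]
    refine Finset.sum_le_sum fun ℓ hℓ => ?_
    obtain ⟨h0, h1⟩ := hFbound d hd ℓ hℓ
    nlinarith
  set Bad : ((Set.Ico m' m'') → ℝ) → Finset (Finset ℕ) :=
    fun d => I.powerset.filter (fun u => ¬ (1/3 ≤ T d u / S d ∧ T d u / S d ≤ 2/3))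
    with hBadDef
  have hBadCard : ∀ d ∈ w, ((Bad d).card : ℝ) ≤ 9 * 2 ^ I.card * β / 2 ^ m := by
    intro d hd
    obtain ⟨hS0, hS1⟩ := hSpos d hd
    have hterm : ∀ u ∈ Bad d, (S d / 6)^2 ≤ (T d u - S d / 2)^2 := by
      intro u hu
      rw [hBadDef, Finset.mem_filter] at hu
      obtain ⟨-, hbad⟩ := hu
      rw [not_and_or, not_le, not_le] at hbad
      rcases hbad with h | h
      · rw [div_lt_iff₀ hS0] at h
        nlinarith
      · rw [lt_div_iff₀ hS0] at h
        nlinarith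
    have h1 : ((Bad d).card : ℝ) * (S d / 6)^2 ≤ 2 ^ I.card * (∑ ℓ ∈ I, (F d ℓ)^2) / 4 := by
      calc ((Bad d).card : ℝ) * (S d / 6)^2 = ∑ _u ∈ Bad d, (S d / 6)^2 := by
            rw [Finset.sum_const, nsmul_eq_mul]
        _ ≤ ∑ u ∈ Bad d, (T d u - S d/2)^2 := Finset.sum_le_sum hterm
        _ ≤ ∑ u ∈ I.powerset, (T d u - S d/2)^2 := by
            refine Finset.sum_le_sum_of_subset_of_nonneg ?_ ?_
            · rw [hBadDef]; exact Finset.filter_subset _ _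
            · intro u _ _; positivity
        _ = 2 ^ I.card * (∑ ℓ ∈ I, (F d ℓ)^2) / 4 := sum_sq_identity (F d) I
    have h2 : ((Bad d).card : ℝ) * (S d / 6)^2 ≤ 2 ^ I.card * ((1 / 2 ^ m) * S d) / 4 := by
      have h3 := hsq d hd
      have hpow : (0:ℝ) < 2 ^ I.card := by positivity
      nlinarith
    have h4 : ((Bad d).card : ℝ) ≤ (2 ^ I.card * ((1 / 2 ^ m) * S d) / 4) / ((S d / 6)^2) := by
      rw [le_div_iff₀ (by positivity)]
      exact h2
    have h5 : ((2:ℝ) ^ I.card * ((1 / 2 ^ m) * S d) / 4) / ((S d / 6)^2)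
        = (9 * 2 ^ I.card / 2 ^ m) * (1 / S d) := by
      field_simp
      ring
    have h6 : 1 / S d ≤ β := by
      rw [div_le_iff₀ hS0]
      rw [div_le_iff₀ hβ] at hS1
      linarith
    calc ((Bad d).card : ℝ) ≤ (9 * 2 ^ I.card / 2 ^ m) * (1 / S d) := by rw [← h5]; exact h4
      _ ≤ (9 * 2 ^ I.card / 2 ^ m) * β := by
          refine mul_le_mul_of_nonneg_left h6 (by positivity)
      _ = 9 * 2 ^ I.card * β / 2 ^ m := by ring
  set B : Finset (Finset ℕ) := W.biUnion Bad with hBdef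
  have hBcard : (B.card : ℝ) < 2 ^ I.card := by
    have h1 : B.card ≤ ∑ d ∈ W, (Bad d).card := Finset.card_biUnion_le
    have h2 : ((∑ d ∈ W, (Bad d).card : ℕ) : ℝ)
        ≤ W.card * (9 * 2 ^ I.card * β / 2 ^ m) := by
      push_cast
      calc ∑ d ∈ W, ((Bad d).card : ℝ)
          ≤ ∑ _d ∈ W, (9 * 2 ^ I.card * β / 2 ^ m) :=
            Finset.sum_le_sum fun d hd => hBadCard d ((Set.Finite.mem_toFinset hwfin).1 hd)
        _ = W.card * (9 * 2 ^ I.card * β / 2 ^ m) := by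
            rw [Finset.sum_const, nsmul_eq_mul]
    have hzp : (2:ℝ) ^ ((m:ℤ) - 2) = 2 ^ m / 4 := by
      rw [zpow_sub₀ (by norm_num : (2:ℝ) ≠ 0), zpow_natCast]
      norm_num
    have h3 : (W.card : ℝ) * (9 * 2 ^ I.card * β / 2 ^ m) ≤ 2 ^ I.card / 16 := by
      have hX : (0:ℝ) ≤ 9 * 2 ^ I.card * β / 2 ^ m := by positivity
      have := mul_le_mul_of_nonneg_right hWcard hX
      refine le_trans this (le_of_eq ?_)
      rw [hzp]
      field_simp
      ring
    have hN1 : (1:ℝ) ≤ 2 ^ I.card := one_le_pow₀ (by norm_num)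
    have hc : ((B.card : ℕ) : ℝ) ≤ ((∑ d ∈ W, (Bad d).card : ℕ) : ℝ) := by
      exact_mod_cast h1
    linarith
  have hlt : B.card < I.powerset.card := by
    rw [Finset.card_powerset]
    have : ((2:ℕ) ^ I.card : ℝ) = (2:ℝ) ^ I.card := by push_cast; ring
    exact_mod_cast hBcard.trans_le (le_of_eq this.symm)
  have hnot : ¬ I.powerset ⊆ B := fun h => absurd (Finset.card_le_card h) (not_le.2 hlt)
  obtain ⟨u, hu, hub⟩ := Finset.not_subset.1 hnot
  have hgood : ∀ d ∈ w, 1/3 ≤ T d u / S d ∧ T d u / S d ≤ 2/3 := by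
    intro d hd
    by_contra hbad
    refine hub (Finset.mem_biUnion.2 ⟨d, (Set.Finite.mem_toFinset hwfin).2 hd, ?_⟩)
    rw [hBadDef]
    exact Finset.mem_filter.2 ⟨hu, hbad⟩
  have huI : u ⊆ I := Finset.mem_powerset.1 hu
  refine ⟨u, I \ u, Finset.union_sdiff_of_subset huI, by simp, ?_⟩
  intro d hd u' hu'
  obtain ⟨hg1, hg2⟩ := hgood d hd
  obtain ⟨hS0, hS1⟩ := hSpos d hd
  have hTc : T d u + T d (I \ u) = S d := by
    rw [hTdef, hSdef, ← Finset.sum_add_distrib]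
    refine Finset.sum_congr rfl fun ℓ hℓ => ?_
    by_cases h : ℓ ∈ u
    · simp [h, Finset.mem_sdiff]
    · simp [h, Finset.mem_sdiff, hℓ]
  simp only [Set.mem_insert_iff, Set.mem_singleton_iff] at hu'
  rcases hu' with rfl | rfl
  · rw [hconv2 d, hconv1 d]
    exact ⟨hg1, hg2⟩
  · rw [hconv2 d, hconv1 d]
    have e : T d (I \ u) = S d - T d u := by linarith
    show 1/3 ≤ T d (I \ u) / S d ∧ T d (I \ u) / S d ≤ 2/3
    rw [e, sub_div, div_self (ne_of_gt hS0)]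
    constructor
    · linarith
    · linarith
end

section
/- Let (m_i)_{i∈ℕ} be a strictly increasing sequence of natural numbers and suppose that for each i ≥ 1 the interval [m_i, m_{i+1}) is partitioned into two sets u_{0,i} and u_{1,i}. Define J = { d̄ ∈ divs : there exists h ∈ {0,1} such that for all but finitely many i ≥ 1, d_ℓ = 0 for every ℓ ∈ u_{h,i} }. Then J is dense in (divs, ≤*): for every d̄ ∈ divs there exists ē ∈ J with ē ≤* d̄. -/
open Filter

/-- If each interval `[m_i, m_{i+1})` (for `i ≥ 1`) is partitioned into `u_{0,i}`
and `u_{1,i}`, then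
`J = { d ∈ divs : ∃ h, for all but finitely many i ≥ 1, d↾u_{h,i} ≡ 0 }`
is dense in `(divs, ≤*)`. -/
theorem J_dense (m : ℕ → ℕ) (hm : StrictMono m) (u : Bool → ℕ → Set ℕ)
    (hcup : ∀ i, 1 ≤ i → u false i ∪ u true i = Set.Ico (m i) (m (i + 1)))
    (hcap : ∀ i, 1 ≤ i → u false i ∩ u true i = ∅)
    (d : ℕ → ℝ) (hd : Divs d) :
    ∃ e : ℕ → ℝ,
      (Divs e ∧ ∃ h : Bool, ∀ᶠ i in atTop, ∀ ℓ ∈ u h i, e ℓ = 0) ∧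
      LeStar e d := by
  classical
  obtain ⟨hd0, hdlim, hdsum⟩ := hd
  -- membership in a block determines the block
  have hsub : ∀ (h : Bool) (j : ℕ), 1 ≤ j → ∀ n ∈ u h j, m j ≤ n ∧ n < m (j + 1) := by
    intro h j hj n hn
    have : n ∈ u false j ∪ u true j := by cases h <;> [left; right] <;> exact hn
    rw [hcup j hj] at this
    exact this
  have huniq : ∀ i j n, m i ≤ n → n < m (i + 1) → m j ≤ n → n < m (j + 1) → i = j := by
    intro i j n h1 h2 h3 h4
    rcases lt_trichotomy i j with hij | hij | hij
    · exact absurd (le_trans (hm.le_iff_le.2 hij) h3) (not_le.2 h2)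
    · exact hij
    · exact absurd (le_trans (hm.le_iff_le.2 hij) h1) (not_le.2 h4)
  set E : Bool → ℕ → ℝ := fun h n => if ∃ i, 1 ≤ i ∧ n ∈ u h i then 0 else d n with hE
  have hE0 : ∀ h n, 0 ≤ E h n := by
    intro h n; simp only [hE]; split
    · exact le_rfl
    · exact hd0 n
  have hEle : ∀ h n, E h n ≤ d n := by
    intro h n; simp only [hE]; split
    · exact hd0 n
    · exact le_rfl
  -- key identity on blocks
  have key : ∀ n, m 1 ≤ n → E false n + E true n = d n := by
    intro n hn
    -- find the block containing n
    have hmn : m 1 ≤ n := hn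
    have h1n : 1 ≤ n := le_trans (hm.le_apply) hn
    set i := Nat.findGreatest (fun i => m i ≤ n) n with hi
    have hiP : m i ≤ n := Nat.findGreatest_spec (P := fun i => m i ≤ n) h1n hmn
    have hi1 : 1 ≤ i := Nat.le_findGreatest (P := fun i => m i ≤ n) h1n hmn
    have hi2 : n < m (i + 1) := by
      by_contra hcon
      push_neg at hcon
      have : i + 1 ≤ n := le_trans hm.le_apply hcon
      exact Nat.findGreatest_is_greatest (P := fun i => m i ≤ n) (Nat.lt_succ_self i) this hcon
    have hmem : n ∈ u false i ∪ u true i := by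
      rw [hcup i hi1]; exact ⟨hiP, hi2⟩
    have hzero : ∀ h : Bool, n ∈ u h i → E h n = 0 := by
      intro h hh; simp only [hE]; exact if_pos ⟨i, hi1, hh⟩
    have hkeep : ∀ h : Bool, n ∈ u h i → E (!h) n = d n := by
      intro h hh
      simp only [hE]
      rw [if_neg]
      rintro ⟨j, hj1, hnj⟩
      obtain ⟨hj2, hj3⟩ := hsub (!h) j hj1 n hnj
      have := huniq i j n hiP hi2 hj2 hj3
      subst this
      have : n ∈ u false i ∩ u true i := by
        cases h
        · exact ⟨hh, hnj⟩
        · exact ⟨hnj, hh⟩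
      rw [hcap i hi1] at this
      exact this
    rcases hmem with hf | ht
    · rw [hzero false hf]
      have := hkeep false hf
      simp only [Bool.not_false] at this
      rw [this]; ring
    · rw [hzero true ht]
      have := hkeep true ht
      simp only [Bool.not_true] at this
      rw [this]; ring
  -- partial sums
  set S : Bool → ℕ → ℝ := fun h N => ∑ n ∈ Finset.range N, E h n with hS
  have hSmono : ∀ h, Monotone (S h) := by
    intro h a b hab
    exact Finset.sum_le_sum_of_subset_of_nonneg (Finset.range_subset_range.2 hab)
      (fun n _ _ => hE0 h n)
  set C : ℝ := ∑ n ∈ Finset.range (m 1), d n with hC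
  have hbound : ∀ N, (∑ n ∈ Finset.range N, d n) ≤ C + S false N + S true N := by
    intro N
    have step1 : (∑ n ∈ Finset.range N, d n) ≤
        ∑ n ∈ Finset.range N, ((if n < m 1 then d n else 0) + (E false n + E true n)) := by
      apply Finset.sum_le_sum
      intro n _
      by_cases hn : n < m 1
      · rw [if_pos hn]
        have := hE0 false n
        have := hE0 true n
        linarith
      · rw [if_neg hn]
        rw [key n (not_lt.1 hn)]
        simp
    have step2 : (∑ n ∈ Finset.range N, (if n < m 1 then d n else 0)) ≤ C := by
      rw [← Finset.sum_filter]
      apply Finset.sum_le_sum_of_subset_of_nonneg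
      · intro x hx
        simp only [Finset.mem_filter, Finset.mem_range] at hx ⊢
        exact hx.2
      · intro n _ _; exact hd0 n
    calc (∑ n ∈ Finset.range N, d n)
        ≤ ∑ n ∈ Finset.range N, ((if n < m 1 then d n else 0) + (E false n + E true n)) :=
          step1
      _ = (∑ n ∈ Finset.range N, (if n < m 1 then d n else 0)) + (S false N + S true N) := by
          rw [Finset.sum_add_distrib, Finset.sum_add_distrib]
      _ ≤ C + S false N + S true N := by linarith
  -- one of the halves diverges
  have hdiv : ∃ h : Bool, ¬ BddAbove (Set.range (S h)) := by
    by_contra hcon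
    push_neg at hcon
    obtain ⟨Bf, hBf⟩ := hcon false
    obtain ⟨Bt, hBt⟩ := hcon true
    obtain ⟨N, hN⟩ := (tendsto_atTop.1 hdsum (C + Bf + Bt + 1)).exists
    have h1 := hbound N
    have h2 : S false N ≤ Bf := hBf ⟨N, rfl⟩
    have h3 : S true N ≤ Bt := hBt ⟨N, rfl⟩
    linarith
  obtain ⟨h, hh⟩ := hdiv
  refine ⟨E h, ⟨⟨fun n => hE0 h n, ?_, ?_⟩, ⟨h, ?_⟩⟩, ?_⟩
  · exact tendsto_of_tendsto_of_tendsto_of_le_of_le tendsto_const_nhds hdlim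
      (fun n => hE0 h n) (fun n => hEle h n)
  · exact tendsto_atTop_atTop_of_monotone' (hSmono h) hh
  · filter_upwards [eventually_ge_atTop 1] with i hi ℓ hℓ
    simp only [hE]
    exact if_pos ⟨i, hi, hℓ⟩
  · exact Eventually.of_forall (fun n => hEle h n)
end

section
/- Let (m_i)_{i∈ℕ} be a strictly increasing sequence of natural numbers and suppose that for each i ≥ 1 the interval [m_i, m_{i+1}) is partitioned into two sets u_{0,i} and u_{1,i}. Define J = { d̄ ∈ divs : there exists h ∈ {0,1} such that for all but finitely many i ≥ 1, d_ℓ = 0 for every ℓ ∈ u_{h,i} }. Then for every d̄ ∈ divs the following are equivalent: (i) there exists d̄' ∈ J such that every ē ∈ divs with ē ≤* d̄ is compatible with d̄'; (ii) there exists h ∈ {0,1} with ∑_{i≥1} ∑_{ℓ∈u_{h,i}} d_ℓ < ∞. -/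
open Filter

private lemma interval_uniq {m : ℕ → ℕ} (hm : StrictMono m) {i j n : ℕ}
    (hi : n ∈ Set.Ico (m i) (m (i + 1))) (hj : n ∈ Set.Ico (m j) (m (j + 1))) : i = j := by
  rcases lt_trichotomy i j with h | h | h
  · exact absurd (lt_of_lt_of_le hi.2 (hm.monotone h)) (not_lt.2 hj.1)
  · exact h
  · exact absurd (lt_of_lt_of_le hj.2 (hm.monotone h)) (not_lt.2 hi.1)

/-- Characterization of the `≈`-closure of
`J = { d ∈ divs : ∃ h, for all but finitely many i ≥ 1, d↾u_{h,i} ≡ 0 }`: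
for `d ∈ divs`, there is `d' ∈ J` compatible with every `e ∈ divs`, `e ≤* d`,
iff for some `h ∈ {0,1}` the double sum `∑_{i≥1} ∑_{ℓ∈u_{h,i}} d_ℓ` is finite. -/
theorem memJclosure_iff (m : ℕ → ℕ) (hm : StrictMono m) (u : Bool → ℕ → Set ℕ)
    (hcup : ∀ i, 1 ≤ i → u false i ∪ u true i = Set.Ico (m i) (m (i + 1)))
    (hcap : ∀ i, 1 ≤ i → u false i ∩ u true i = ∅)
    (d : ℕ → ℝ) (hd : Divs d) :
    (∃ d' : ℕ → ℝ,
        (Divs d' ∧ ∃ h : Bool, ∀ᶠ i in atTop, ∀ ℓ ∈ u h i, d' ℓ = 0) ∧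
        ∀ e : ℕ → ℝ, Divs e → LeStar e d → DivsCompat e d') ↔
      ∃ h : Bool, Summable (fun i : ℕ =>
        ∑ ℓ ∈ Finset.Ico (m (i + 1)) (m (i + 2)), (u h (i + 1)).indicator d ℓ) := by
  classical
  have hsub : ∀ (h : Bool) (i : ℕ), 1 ≤ i → u h i ⊆ Set.Ico (m i) (m (i + 1)) := by
    intro h i hi x hx
    rw [← hcup i hi]
    cases h
    · exact Or.inl hx
    · exact Or.inr hx
  set S : Bool → Set ℕ := fun h => {n | ∃ j, 1 ≤ j ∧ n ∈ u h j} with hS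
  set eS : Bool → ℕ → ℝ := fun h => (S h).indicator d with heSdef
  have heS0 : ∀ h n, 0 ≤ eS h n := fun h n => Set.indicator_nonneg (fun a _ => hd.1 a) n
  have heSled : ∀ h n, eS h n ≤ d n := by
    intro h n
    by_cases hn : n ∈ S h
    · simp [heSdef, Set.indicator_of_mem hn]
    · simp [heSdef, Set.indicator_of_notMem hn, hd.1 n]
  have hind : ∀ (h : Bool) (i n : ℕ), 1 ≤ i → n ∈ Set.Ico (m i) (m (i + 1)) →
      eS h n = (u h i).indicator d n := by
    intro h i n hi hn
    by_cases hmem : n ∈ u h i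
    · have hmemS : n ∈ S h := ⟨i, hi, hmem⟩
      rw [Set.indicator_of_mem hmem]
      exact Set.indicator_of_mem hmemS d
    · rw [Set.indicator_of_notMem hmem]
      apply Set.indicator_of_notMem
      rintro ⟨j, hj, hnj⟩
      exact hmem ((interval_uniq hm (hsub h j hj hnj) hn) ▸ hnj)
  have hpartial : ∀ (h : Bool) (I : ℕ),
      ∑ n ∈ Finset.range (m (I + 1)), eS h n
        = ∑ i ∈ Finset.range I,
            ∑ ℓ ∈ Finset.Ico (m (i + 1)) (m (i + 2)), (u h (i + 1)).indicator d ℓ := by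
    intro h I
    induction I with
    | zero =>
      simp only [Finset.range_zero, Finset.sum_empty]
      apply Finset.sum_eq_zero
      intro n hn
      apply Set.indicator_of_notMem
      rintro ⟨j, hj, hnj⟩
      have h1 := (hsub h j hj hnj).1
      have h2 : m 1 ≤ n := le_trans (hm.monotone hj) h1
      have h3 : n < m 1 := by simpa using Finset.mem_range.1 hn
      omega
    | succ I ih =>
      have hle : m (I + 1) ≤ m (I + 1 + 1) := hm.monotone (by omega)
      have hsplit : ∑ n ∈ Finset.range (m (I + 1 + 1)), eS h n
          = ∑ n ∈ Finset.range (m (I + 1)), eS h n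
            + ∑ n ∈ Finset.Ico (m (I + 1)) (m (I + 1 + 1)), eS h n := by
        rw [Finset.range_eq_Ico, Finset.range_eq_Ico,
          Finset.sum_Ico_consecutive _ (Nat.zero_le _) hle]
      rw [Finset.sum_range_succ, ← ih, hsplit]
      congr 1
      apply Finset.sum_congr rfl
      intro n hn
      have hn' : n ∈ Set.Ico (m (I + 1)) (m (I + 2)) := by
        have := Finset.mem_Ico.1 hn
        exact ⟨this.1, this.2⟩
      exact hind h (I + 1) n (by omega) hn'
  have hmono : ∀ h, Monotone (fun N => ∑ n ∈ Finset.range N, eS h n) := by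
    intro h
    apply monotone_nat_of_le_succ
    intro n
    rw [Finset.sum_range_succ]
    exact le_add_of_nonneg_right (heS0 h n)
  have hmtop : Tendsto (fun I => m (I + 1)) atTop atTop := by
    have : StrictMono (fun I => m (I + 1)) := fun a b hab => hm (by omega)
    exact this.tendsto_atTop
  have hkey : ∀ h : Bool,
      Summable (fun i : ℕ =>
        ∑ ℓ ∈ Finset.Ico (m (i + 1)) (m (i + 2)), (u h (i + 1)).indicator d ℓ)
        ↔ ¬ Tendsto (fun N => ∑ n ∈ Finset.range N, eS h n) atTop atTop := by
    intro h
    rw [summable_iff_not_tendsto_nat_atTop_of_nonneg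
        (fun i => Finset.sum_nonneg fun ℓ _ => Set.indicator_nonneg (fun a _ => hd.1 a) ℓ)]
    constructor
    · intro h1 h2
      apply h1
      have heq : (fun I => ∑ i ∈ Finset.range I,
          ∑ ℓ ∈ Finset.Ico (m (i + 1)) (m (i + 2)), (u h (i + 1)).indicator d ℓ)
          = (fun N => ∑ n ∈ Finset.range N, eS h n) ∘ (fun I => m (I + 1)) := by
        funext I
        exact (hpartial h I).symm
      rw [heq]
      exact h2.comp hmtop
    · intro h1 h2
      apply h1
      apply tendsto_atTop_of_monotone_of_subseq (hmono h) (φ := fun I => m (I + 1)) (l := atTop)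
      have heq : (fun N => ∑ n ∈ Finset.range N, eS h n) ∘ (fun I => m (I + 1))
          = (fun I => ∑ i ∈ Finset.range I,
            ∑ ℓ ∈ Finset.Ico (m (i + 1)) (m (i + 2)), (u h (i + 1)).indicator d ℓ) := by
        funext I
        exact hpartial h I
      rw [heq]
      exact h2
  have hbound : ∀ h : Bool,
      Summable (fun i : ℕ =>
        ∑ ℓ ∈ Finset.Ico (m (i + 1)) (m (i + 2)), (u h (i + 1)).indicator d ℓ) →
      ∀ N, ∑ n ∈ Finset.range N, eS h n ≤
        ∑' i : ℕ, ∑ ℓ ∈ Finset.Ico (m (i + 1)) (m (i + 2)), (u h (i + 1)).indicator d ℓ := by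
    intro h hsum N
    have h1 : ∑ n ∈ Finset.range N, eS h n ≤ ∑ n ∈ Finset.range (m (N + 1)), eS h n :=
      hmono h (le_trans hm.le_apply (hm.monotone (Nat.le_succ N)))
    rw [hpartial h N] at h1
    exact le_trans h1 (Summable.sum_le_tsum _ (fun i _ =>
      Finset.sum_nonneg fun ℓ _ => Set.indicator_nonneg (fun a _ => hd.1 a) ℓ) hsum)
  constructor
  · rintro ⟨d', ⟨hd'divs, h', hvan⟩, hcompat⟩
    by_contra hns
    push_neg at hns
    have hns' : ∀ h : Bool, Tendsto (fun N => ∑ n ∈ Finset.range N, eS h n) atTop atTop := by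
      intro h
      by_contra hcon
      exact (hns h) ((hkey h).2 hcon)
    have heDivs : Divs (eS h') :=
      ⟨heS0 h', squeeze_zero (heS0 h') (heSled h') hd.2.1, hns' h'⟩
    obtain ⟨f, hfDivs, hfe, hfd'⟩ :=
      hcompat (eS h') heDivs (Eventually.of_forall (heSled h'))
    obtain ⟨i0, hi0⟩ := eventually_atTop.1 hvan
    obtain ⟨n1, hn1⟩ := eventually_atTop.1 hfe
    obtain ⟨n2, hn2⟩ := eventually_atTop.1 hfd'
    set N0 := max (max n1 n2) (m (i0 + 1)) with hN0
    have hzero : ∀ n, N0 ≤ n → f n = 0 := by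
      intro n hn
      have h1 : f n ≤ eS h' n := hn1 n (by omega)
      have h2 : f n ≤ d' n := hn2 n (by omega)
      have h3 : m (i0 + 1) ≤ n := by omega
      by_cases hmem : n ∈ S h'
      · obtain ⟨j, hj, hnj⟩ := hmem
        have hIco := hsub h' j hj hnj
        have hji : i0 ≤ j := by
          by_contra hlt
          push_neg at hlt
          have h4 : m (j + 1) ≤ m (i0 + 1) := hm.monotone (by omega)
          have h5 := hIco.2
          omega
        have h6 : d' n = 0 := hi0 j hji n hnj
        linarith [hfDivs.1 n]
      · have h7 : eS h' n = 0 := Set.indicator_of_notMem hmem d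
        linarith [hfDivs.1 n]
    have hconst : ∀ N, N0 ≤ N →
        ∑ n ∈ Finset.range N, f n = ∑ n ∈ Finset.range N0, f n := by
      intro N hN
      symm
      apply Finset.sum_subset (Finset.range_subset_range.2 hN)
      intro x _ hx'
      exact hzero x (by simpa using hx')
    obtain ⟨N, hN1, hN2⟩ :=
      ((hfDivs.2.2.eventually (eventually_gt_atTop (∑ n ∈ Finset.range N0, f n))).and
        (eventually_ge_atTop N0)).exists
    rw [hconst N hN2] at hN1
    exact lt_irrefl _ hN1
  · rintro ⟨h, hsum⟩
    set C := ∑' i : ℕ, ∑ ℓ ∈ Finset.Ico (m (i + 1)) (m (i + 2)), (u h (i + 1)).indicator d ℓ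
      with hC
    have hCb := hbound h hsum
    set d' : ℕ → ℝ := fun n => d n - eS h n with hd'def
    have hd'0 : ∀ n, 0 ≤ d' n := fun n => by
      simp only [hd'def]
      linarith [heSled h n]
    have hd'led : ∀ n, d' n ≤ d n := fun n => by
      simp only [hd'def]
      linarith [heS0 h n]
    have hd'sum : ∀ N, ∑ n ∈ Finset.range N, d' n
        = ∑ n ∈ Finset.range N, d n - ∑ n ∈ Finset.range N, eS h n := by
      intro N
      simp only [hd'def]
      exact Finset.sum_sub_distrib _ _
    have hd'divs : Divs d' := by
      refine ⟨hd'0, squeeze_zero hd'0 hd'led hd.2.1, ?_⟩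
      apply tendsto_atTop_mono (g := fun N => ∑ n ∈ Finset.range N, d' n)
        (f := fun N => ∑ n ∈ Finset.range N, d n + (-C))
      · intro N
        rw [hd'sum N]
        linarith [hCb N]
      · exact tendsto_atTop_add_const_right atTop (-C) hd.2.2
    refine ⟨d', ⟨hd'divs, ⟨h, ?_⟩⟩, ?_⟩
    · filter_upwards [eventually_ge_atTop 1] with i hi ℓ hℓ
      have hmemS : ℓ ∈ S h := ⟨i, hi, hℓ⟩
      have : eS h ℓ = d ℓ := Set.indicator_of_mem hmemS d
      simp only [hd'def]
      linarith
    · intro e he hed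
      obtain ⟨n0, hn0⟩ := eventually_atTop.1 hed
      refine ⟨fun n => min (e n) (d' n),
        ⟨fun n => le_min (he.1 n) (hd'0 n),
         squeeze_zero (fun n => le_min (he.1 n) (hd'0 n)) (fun n => min_le_left _ _) he.2.1,
         ?_⟩,
        Eventually.of_forall fun n => min_le_left _ _,
        Eventually.of_forall fun n => min_le_right _ _⟩
      have hsplit : ∀ (g : ℕ → ℝ) (N : ℕ), n0 ≤ N →
          ∑ n ∈ Finset.range N, g n
            = ∑ n ∈ Finset.range n0, g n + ∑ n ∈ Finset.Ico n0 N, g n := by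
        intro g N hN
        rw [Finset.range_eq_Ico, Finset.range_eq_Ico,
          Finset.sum_Ico_consecutive _ (Nat.zero_le n0) hN]
      have hkey2 : ∀ N, n0 ≤ N →
          (∑ n ∈ Finset.range N, e n) + (-(∑ n ∈ Finset.range n0, e n) - C)
            ≤ ∑ n ∈ Finset.range N, min (e n) (d' n) := by
        intro N hN
        rw [hsplit (fun n => min (e n) (d' n)) N hN, hsplit e N hN]
        have h1 : (0:ℝ) ≤ ∑ n ∈ Finset.range n0, min (e n) (d' n) :=
          Finset.sum_nonneg fun n _ => le_min (he.1 n) (hd'0 n)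
        have h2 : ∑ n ∈ Finset.Ico n0 N, e n - ∑ n ∈ Finset.Ico n0 N, eS h n
            ≤ ∑ n ∈ Finset.Ico n0 N, min (e n) (d' n) := by
          rw [← Finset.sum_sub_distrib]
          apply Finset.sum_le_sum
          intro n hn
          have hne : e n ≤ d n := hn0 n (Finset.mem_Ico.1 hn).1
          have h3 := heS0 h n
          apply le_min
          · linarith
          · simp only [hd'def]
            linarith
        have h3 : ∑ n ∈ Finset.Ico n0 N, eS h n ≤ C := by
          have h4 : ∑ n ∈ Finset.Ico n0 N, eS h n ≤ ∑ n ∈ Finset.range N, eS h n := by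
            rw [hsplit (eS h) N hN]
            have : (0:ℝ) ≤ ∑ n ∈ Finset.range n0, eS h n :=
              Finset.sum_nonneg fun n _ => heS0 h n
            linarith
          linarith [hCb N]
        linarith
      apply tendsto_atTop_mono' atTop ?_
        (tendsto_atTop_add_const_right atTop (-(∑ n ∈ Finset.range n0, e n) - C) he.2.2)
      filter_upwards [eventually_ge_atTop n0] with N hN using hkey2 N hN
end
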